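/- Let F be a totally real number field, B either F, a CM extension of F, or a totally definite quaternion algebra over F, and O an order of B. Let V = B^n with a totally positive Hermitian form f (with respect to the main involution of B). Then every nonzero element x of an O-lattice L ⊆ V can be written as a finite sum of primitive elements of L, where x ∈ L is primitive if it cannot be written x = y + z with y, z ∈ L nonzero and f(y,z) = 0. -/

import Mathlib

open Complex in
lemma aux_trace_pos (F : Type*) [Field F] [NumberField F]
    (htot : ∀ φ : F →+* ℂ, ∀ x : F, (φ x).im = 0)
    (c : F) (hc : ∀ σ : F →+* ℝ, 0 < σ c) : 0 < Algebra.trace ℚ F c := by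
  have hne : Nonempty (F →ₐ[ℚ] ℂ) := ⟨IsAlgClosed.lift⟩
  have key : ((Algebra.trace ℚ F c : ℚ) : ℂ) = ∑ σ : F →ₐ[ℚ] ℂ, σ c := by
    simpa using trace_eq_sum_embeddings (K := ℚ) (L := F) ℂ (x := c)
  have hre : ∀ σ : F →ₐ[ℚ] ℂ, 0 < (σ c).re := by
    intro σ
    let r : F →+* ℝ :=
      { toFun := fun x => (σ x).re
        map_one' := by simp
        map_mul' := by
          intro x y
          have hx := htot (σ : F →+* ℂ) x
          have hy := htot (σ : F →+* ℂ) y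
          simp only [RingHom.coe_coe] at hx hy
          simp only [map_mul, Complex.mul_re, hx, hy, mul_zero, sub_zero]
        map_zero' := by simp
        map_add' := by intro x y; simp }
    exact hc r
  have h2 : (0:ℝ) < ((Algebra.trace ℚ F c : ℚ) : ℂ).re := by
    rw [key, Complex.re_sum]
    exact Finset.sum_pos (fun σ _ => hre σ) Finset.univ_nonempty
  rw [Complex.ratCast_re] at h2
  exact_mod_cast h2

lemma aux_den_dvd (q : ℚ) (N : ℕ) (h : q.den ∣ N) : ∃ z : ℤ, (N : ℚ) * q = z := by
  obtain ⟨k, hk⟩ := h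
  refine ⟨(k : ℤ) * q.num, ?_⟩
  have h1 : q * (q.den : ℚ) = (q.num : ℚ) := Rat.mul_den_eq_num q
  push_cast [hk]
  rw [mul_comm ((q.den : ℚ) * k) q, ← mul_assoc, h1, mul_comm]


/-- Let `F` be a totally real number field, `B` either `F` itself, a CM extension of `F`, or a
totally definite quaternion algebra over `F`, equipped with its main involution `star` (which
fixes `F`), and `O` an order of `B`.  Let `V = Bⁿ` with a totally positive Hermitian form `f`.
Then every nonzero element `x` of an `O`-lattice `L ⊆ V` is a finite sum of primitive elements
of `L`, where `x ∈ L` is primitive if it cannot be written `x = y + z` with `y, z ∈ L` nonzero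
and `f(y,z) = 0`. -/
theorem sum_of_primitive_elements
    (F : Type*) [Field F] [NumberField F]
    -- `F` is totally real
    (htotreal : ∀ φ : F →+* ℂ, ∀ x : F, (φ x).im = 0)
    (B : Type*) [Ring B] [StarRing B] [Algebra F B]
    -- the main involution fixes `F`
    (hstarF : ∀ a : F, star (algebraMap F B a) = algebraMap F B a)
    -- `B` is `F`, a CM field over `F`, or a totally definite quaternion algebra over `F`
    (hcase :
      Nonempty (B ≃ₐ[F] F) ∨
      ((∀ x y : B, x * y = y * x) ∧ IsField B ∧ Module.finrank F B = 2 ∧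
        ∀ φ : B →+* ℂ, ∃ x : B, (φ x).im ≠ 0) ∨
      (∃ a b : F, Nonempty (B ≃ₐ[F] QuaternionAlgebra F a 0 b) ∧
        ∀ σ : F →+* ℝ, σ a < 0 ∧ σ b < 0))
    -- `O` is an order of `B`: a unitary subring which is a lattice in `B`
    (O : Subring B)
    (hOfg : ∃ s : Finset B, (s : Set B) ⊆ (O : Set B) ∧
      ∀ b ∈ O, b ∈ Submodule.span ℤ (s : Set B))
    (hOfull : ∀ b : B, ∃ m : ℤ, m ≠ 0 ∧ (m : B) * b ∈ O)
    -- `V = Bⁿ` and the Hermitian form `f`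
    (n : ℕ) (f : (Fin n → B) → (Fin n → B) → B)
    (hf_add : ∀ x₁ x₂ y : Fin n → B, f (x₁ + x₂) y = f x₁ y + f x₂ y)
    (hf_smul : ∀ (a : B) (x y : Fin n → B), f (a • x) y = a * f x y)
    (hf_conj : ∀ x y : Fin n → B, f y x = star (f x y))
    -- `f` is totally positive
    (hf_pos : ∀ x : Fin n → B, x ≠ 0 → ∃ c : F,
      f x x = algebraMap F B c ∧ ∀ σ : F →+* ℝ, 0 < σ c)
    -- `L` is an `O`-lattice in `V`
    (L : Submodule ℤ (Fin n → B)) (hLfg : L.FG)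
    (hLfull : ∀ v : Fin n → B, ∃ m : ℤ, m ≠ 0 ∧ m • v ∈ L)
    (hLO : ∀ a ∈ O, ∀ x ∈ L, a • x ∈ L) :
    ∀ x ∈ L, x ≠ 0 →
      ∃ l : List (Fin n → B),
        (∀ y ∈ l, y ∈ L ∧ y ≠ 0 ∧
          ¬ ∃ u v : Fin n → B, u ∈ L ∧ v ∈ L ∧ u ≠ 0 ∧ v ≠ 0 ∧ y = u + v ∧ f u v = 0) ∧
        l.sum = x := by
  classical
  -- `B` is nontrivial
  have hBnt : Nontrivial B := by
    rcases hcase with he | ⟨_, hfield, _⟩ | ⟨a, b, he, _⟩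
    · obtain ⟨e⟩ := he
      exact ⟨e.symm 0, e.symm 1, fun h => zero_ne_one (e.symm.injective h)⟩
    · exact ⟨hfield.exists_pair_ne⟩
    · obtain ⟨e⟩ := he
      exact ⟨e.symm 0, e.symm 1, fun h => zero_ne_one (e.symm.injective h)⟩
  have hinj : Function.Injective (algebraMap F B) := RingHom.injective _
  -- basic sesquilinearity consequences
  have hf0l : ∀ y, f 0 y = 0 := by
    intro y
    have h := hf_add 0 0 y
    rw [add_zero] at h
    exact (left_eq_add.mp h)
  have hf0r : ∀ x, f x 0 = 0 := by
    intro x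
    rw [hf_conj 0 x, hf0l, star_zero]
  have hf_addr : ∀ x y₁ y₂ : Fin n → B, f x (y₁ + y₂) = f x y₁ + f x y₂ := by
    intro x y₁ y₂
    rw [hf_conj (y₁ + y₂) x, hf_add, star_add, ← hf_conj y₁ x, ← hf_conj y₂ x]
  have hf_zsl : ∀ (m : ℤ) (x y : Fin n → B), f (m • x) y = m • f x y := by
    intro m x y
    rw [← Int.cast_smul_eq_zsmul B m x, hf_smul, ← Int.cast_smul_eq_zsmul B m (f x y),
      smul_eq_mul]
  have hf_zsr : ∀ (m : ℤ) (x y : Fin n → B), f x (m • y) = m • f x y := by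
    intro m x y
    rw [hf_conj (m • y) x, hf_zsl]
    rw [show star (m • f y x) = m • star (f y x) from map_zsmul (starAddEquiv : B ≃+ B) m _,
      ← hf_conj y x]
  -- generators of `L`
  obtain ⟨s, hsL⟩ := hLfg
  set M : Submodule ℤ B :=
    Submodule.span ℤ (((s ×ˢ s).image (fun p => f p.1 p.2) : Finset B) : Set B) with hM
  have hMfg : M.FG := ⟨_, rfl⟩
  have hfM : ∀ x ∈ L, ∀ y ∈ L, f x y ∈ M := by
    intro x hx y hy
    rw [← hsL] at hx hy
    induction hx, hy using Submodule.span_induction₂ with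
    | mem_mem u v hu hv =>
      exact Submodule.subset_span (by
        simp only [Finset.coe_image, Set.mem_image, Finset.mem_coe, Finset.mem_product]
        exact ⟨(u, v), ⟨hu, hv⟩, rfl⟩)
    | zero_left v hv => rw [hf0l]; exact zero_mem _
    | zero_right u hu => rw [hf0r]; exact zero_mem _
    | add_left u₁ u₂ v _ _ _ h₁ h₂ => rw [hf_add]; exact add_mem h₁ h₂
    | add_right u v₁ v₂ _ _ _ h₁ h₂ => rw [hf_addr]; exact add_mem h₁ h₂
    | smul_left m u v _ _ h => rw [hf_zsl]; exact Submodule.smul_mem _ _ h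
    | smul_right m u v _ _ h => rw [hf_zsr]; exact Submodule.smul_mem _ _ h
  -- the submodule of `M` coming from `F`
  set AlgL : F →ₗ[ℤ] B := ((Algebra.linearMap F B).restrictScalars ℤ) with hAlgL
  set P : Submodule ℤ B := M ⊓ LinearMap.range AlgL with hP
  have hPfg : P.FG := by
    have hnoe : IsNoetherian ℤ ↥M := isNoetherian_of_fg_of_noetherian _ hMfg
    have h1 : (P.comap M.subtype).FG := IsNoetherian.noetherian _
    have h2 := h1.map M.subtype
    rwa [Submodule.map_comap_subtype, inf_eq_right.mpr inf_le_left] at h2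
  obtain ⟨t, htP⟩ := hPfg
  -- choose preimages in `F` of the generators of `P`
  set g : B → F := fun b =>
    if h : ∃ c : F, algebraMap F B c = b then h.choose else 0 with hg
  have hgspec : ∀ b ∈ t, algebraMap F B (g b) = b := by
    intro b hb
    have hbP : b ∈ P := htP ▸ Submodule.subset_span hb
    obtain ⟨c, hc⟩ := hbP.2
    have hex : ∃ c : F, algebraMap F B c = b := ⟨c, hc⟩
    simp only [hg, dif_pos hex]
    exact hex.choose_spec
  set N : ℕ := ∏ b ∈ t, (Algebra.trace ℚ F (g b)).den with hNdef
  have hN0 : 0 < N := Finset.prod_pos (fun b _ => (Algebra.trace ℚ F (g b)).den_pos)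
  -- key integrality statement
  have key : ∀ c : F, algebraMap F B c ∈ M → ∃ z : ℤ, (N : ℚ) * Algebra.trace ℚ F c = z := by
    intro c hc
    have hcP : algebraMap F B c ∈ P := ⟨hc, ⟨c, rfl⟩⟩
    rw [← htP] at hcP
    have Q : ∀ b ∈ Submodule.span ℤ (t : Set B),
        ∃ (c' : F) (z : ℤ), algebraMap F B c' = b ∧ (N : ℚ) * Algebra.trace ℚ F c' = z := by
      intro b hb
      induction hb using Submodule.span_induction with
      | mem b hb =>
        obtain ⟨z, hz⟩ := aux_den_dvd (Algebra.trace ℚ F (g b)) N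
          (Finset.dvd_prod_of_mem _ hb)
        exact ⟨g b, z, hgspec b hb, hz⟩
      | zero => exact ⟨0, 0, map_zero _, by simp⟩
      | add b₁ b₂ _ _ h₁ h₂ =>
        obtain ⟨c₁, z₁, hc₁, hz₁⟩ := h₁
        obtain ⟨c₂, z₂, hc₂, hz₂⟩ := h₂
        refine ⟨c₁ + c₂, z₁ + z₂, by rw [map_add, hc₁, hc₂], ?_⟩
        rw [map_add]
        push_cast
        rw [mul_add, hz₁, hz₂]
      | smul m b _ h =>
        obtain ⟨c', z, hc', hz⟩ := h
        refine ⟨m • c', m * z, by rw [map_zsmul, hc'], ?_⟩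
        rw [map_zsmul, zsmul_eq_mul]
        push_cast
        rw [← hz]
        ring
    obtain ⟨c', z, hcc', hz⟩ := Q _ hcP
    have hce : c' = c := hinj hcc'
    exact ⟨z, hce ▸ hz⟩
  -- positivity and integrality for values of the form
  have posint : ∀ x ∈ L, x ≠ 0 → ∀ c : F, f x x = algebraMap F B c →
      ∃ z : ℤ, 1 ≤ z ∧ (N : ℚ) * Algebra.trace ℚ F c = z := by
    intro x hx hx0 c hfc
    obtain ⟨z, hz⟩ := key c (hfc ▸ hfM x hx x hx)
    obtain ⟨c', hc'1, hc'2⟩ := hf_pos x hx0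
    have hcc : c = c' := hinj (by rw [← hfc, hc'1])
    have hpos : 0 < Algebra.trace ℚ F c := by
      rw [hcc]; exact aux_trace_pos F htotreal c' hc'2
    have hzpos : (0 : ℚ) < z := by
      rw [← hz]
      positivity
    have : (0 : ℤ) < z := by exact_mod_cast hzpos
    exact ⟨z, this, hz⟩
  -- main induction on the size of the trace
  have main : ∀ k : ℕ, ∀ x ∈ L, x ≠ 0 → ∀ c : F, f x x = algebraMap F B c →
      (N : ℚ) * Algebra.trace ℚ F c ≤ k →
      ∃ l : List (Fin n → B),
        (∀ y ∈ l, y ∈ L ∧ y ≠ 0 ∧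
          ¬ ∃ u v : Fin n → B, u ∈ L ∧ v ∈ L ∧ u ≠ 0 ∧ v ≠ 0 ∧ y = u + v ∧ f u v = 0) ∧
        l.sum = x := by
    intro k
    induction k with
    | zero =>
      intro x hx hx0 c hfc hle
      obtain ⟨z, hz1, hz2⟩ := posint x hx hx0 c hfc
      exfalso
      rw [hz2] at hle
      have h1 : (1 : ℚ) ≤ z := by exact_mod_cast hz1
      simp only [Nat.cast_zero] at hle
      linarith
    | succ k ih =>
      intro x hx hx0 c hfc hle
      by_cases hp : ∃ u v : Fin n → B, u ∈ L ∧ v ∈ L ∧ u ≠ 0 ∧ v ≠ 0 ∧ x = u + v ∧ f u v = 0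
      · obtain ⟨u, v, huL, hvL, hu0, hv0, hxuv, hfuv⟩ := hp
        obtain ⟨cu, hcu, _⟩ := hf_pos u hu0
        obtain ⟨cv, hcv, _⟩ := hf_pos v hv0
        have hvu : f v u = 0 := by rw [hf_conj u v, hfuv, star_zero]
        have hsplit : c = cu + cv := by
          apply hinj
          rw [map_add, ← hfc, ← hcu, ← hcv, hxuv, hf_add, hf_addr, hf_addr, hfuv, hvu]
          abel
        obtain ⟨zu, hzu1, hzu2⟩ := posint u huL hu0 cu hcu
        obtain ⟨zv, hzv1, hzv2⟩ := posint v hvL hv0 cv hcv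
        have htr : (N : ℚ) * Algebra.trace ℚ F c
            = (N : ℚ) * Algebra.trace ℚ F cu + (N : ℚ) * Algebra.trace ℚ F cv := by
          rw [hsplit, map_add]; ring
        have h1u : (1 : ℚ) ≤ zu := by exact_mod_cast hzu1
        have h1v : (1 : ℚ) ≤ zv := by exact_mod_cast hzv1
        have hk1 : ((k + 1 : ℕ) : ℚ) = (k : ℚ) + 1 := by push_cast; ring
        have hu_le : (N : ℚ) * Algebra.trace ℚ F cu ≤ k := by
          rw [hzu2]
          rw [htr, hzu2, hzv2, hk1] at hle
          linarith
        have hv_le : (N : ℚ) * Algebra.trace ℚ F cv ≤ k := by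
          rw [hzv2]
          rw [htr, hzu2, hzv2, hk1] at hle
          linarith
        obtain ⟨lu, hlu, hlusum⟩ := ih u huL hu0 cu hcu hu_le
        obtain ⟨lv, hlv, hlvsum⟩ := ih v hvL hv0 cv hcv hv_le
        refine ⟨lu ++ lv, ?_, ?_⟩
        · intro y hy
          rcases List.mem_append.mp hy with h | h
          · exact hlu y h
          · exact hlv y h
        · rw [List.sum_append, hlusum, hlvsum, hxuv]
      · refine ⟨[x], ?_, by simp⟩
        intro y hy
        simp only [List.mem_singleton] at hy
        subst hy
        exact ⟨hx, hx0, hp⟩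
  intro x hx hx0
  obtain ⟨c, hfc, _⟩ := hf_pos x hx0
  exact main ⌈(N : ℚ) * Algebra.trace ℚ F c⌉₊ x hx hx0 c hfc (Nat.le_ceil _)
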